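/- For every positive integer r and every real x with −π ≤ x ≤ π, ∑_{n=1}^∞ (−1)^{n−1} sin(nx)/n^{2r+1} = ∑_{k=1}^{r} (−1)^{k−1} x^{2k−1} η(2r+2−2k)/(2k−1)! + (−1)^r x^{2r+1}/(2·(2r+1)!). -/

import Mathlib

open Real Finset

lemma bernoulliFun_eq_sum (n : ℕ) (y : ℝ) :
    bernoulliFun n y
      = ∑ i ∈ range (n+1), ((_root_.bernoulli i : ℚ) : ℝ) * (n.choose i : ℝ) * y ^ (n - i) := by
  rw [bernoulliFun, Polynomial.bernoulli, Polynomial.map_sum, Polynomial.eval_finset_sum]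
  refine Finset.sum_congr rfl fun i hi => ?_
  rw [Polynomial.map_monomial, Polynomial.eval_monomial, eq_ratCast]
  push_cast
  ring

lemma bernoulliFun_add (n : ℕ) (s t : ℝ) :
    bernoulliFun n (s + t)
      = ∑ k ∈ range (n+1), (n.choose k : ℝ) * bernoulliFun k s * t ^ (n - k) := by
  simp_rw [bernoulliFun_eq_sum, add_pow, mul_sum, sum_mul]
  rw [Finset.sum_sigma', Finset.sum_sigma']
  refine Finset.sum_nbij' (fun p => ⟨p.1 + p.2, p.1⟩) (fun p => ⟨p.2, p.1 - p.2⟩) ?_ ?_ ?_ ?_ ?_ <;>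
    simp only [Finset.mem_sigma, Finset.mem_range, Sigma.forall] <;> intro a b hab
  · omega
  · omega
  · have : a + b - a = b := by omega
    rw [this]
  · have : b + (a - b) = a := by omega
    rw [this]
  · have h1 : a + b - a = b := by omega
    have h2 : n - a - b = n - (a + b) := by omega
    have h3 := Nat.choose_mul (n := n) (k := a + b) (Nat.le_add_right a b)
    have h4 : ((a + b) - a) = b := by omega
    rw [h4] at h3
    have h3' : ((n.choose (a+b) : ℝ)) * ((a+b).choose a : ℝ) = (n.choose a : ℝ) * ((n-a).choose b : ℝ) := by
      exact_mod_cast congrArg (Nat.cast : ℕ → ℝ) h3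
    rw [h1, h2]
    linear_combination -((_root_.bernoulli a : ℚ) : ℝ) * s ^ b * t ^ (n - (a+b)) * h3'

noncomputable def etaR (s : ℕ) : ℝ := ∑' n : ℕ, (-1 : ℝ) ^ n / (n + 1 : ℝ) ^ s

lemma hasSum_etaR_even {m : ℕ} (hm : m ≠ 0) :
    HasSum (fun n : ℕ => (-1 : ℝ) ^ n / (n + 1 : ℝ) ^ (2 * m))
      ((-1 : ℝ) ^ m * (2 * π) ^ (2 * m) / 2 / (2 * m).factorial *
        bernoulliFun (2 * m) (1 / 2)) := by
  have h := hasSum_one_div_nat_pow_mul_cos hm (x := 1/2) ⟨by norm_num, by norm_num⟩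
  have hfun : ∀ n : ℕ, (1 : ℝ) / (n : ℝ) ^ (2 * m) * Real.cos (2 * π * n * (1/2))
      = (-1 : ℝ) ^ n / (n : ℝ) ^ (2 * m) := by
    intro n
    have h2 : 2 * π * n * (1/2) = (n : ℝ) * π - 0 := by ring
    rw [h2, Real.cos_nat_mul_pi_sub, Real.cos_zero]
    ring
  rw [funext hfun] at h
  have hshift : HasSum (fun n : ℕ => (-1 : ℝ) ^ (n + 1) / ((n + 1 : ℕ) : ℝ) ^ (2 * m))
      ((-1 : ℝ) ^ (m + 1) * (2 * π) ^ (2 * m) / 2 / (2 * m).factorial *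
        bernoulliFun (2 * m) (1 / 2)) := by
    rw [hasSum_nat_add_iff (f := fun n : ℕ => (-1 : ℝ) ^ n / (n : ℝ) ^ (2 * m)) 1]
    convert h using 1
    · exact rfl
    rw [Finset.sum_range_one, pow_zero, Nat.cast_zero, zero_pow (by omega : 2 * m ≠ 0),
      div_zero, add_zero, bernoulliFun]
  have heq : (fun n : ℕ => (-1 : ℝ) ^ n / (n + 1 : ℝ) ^ (2 * m))
      = fun n : ℕ => -((-1 : ℝ) ^ (n + 1) / ((n + 1 : ℕ) : ℝ) ^ (2 * m)) := by
    funext n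
    push_cast
    ring
  rw [heq]
  convert hshift.neg using 1
  · exact rfl
  ring

lemma etaR_even {m : ℕ} (hm : m ≠ 0) :
    etaR (2 * m) = (-1 : ℝ) ^ m * (2 * π) ^ (2 * m) / 2 / (2 * m).factorial *
      bernoulliFun (2 * m) (1 / 2) :=
  (hasSum_etaR_even hm).tsum_eq

lemma bernoulliFun_odd_half (j : ℕ) : bernoulliFun (2 * j + 1) (1 / 2) = 0 := by
  rcases Nat.eq_zero_or_pos j with rfl | hj
  · have : bernoulliFun 1 (1/2 : ℝ)
        = ∑ i ∈ range 2, ((_root_.bernoulli i : ℚ) : ℝ) * ((1:ℕ).choose i : ℝ) * (1/2 : ℝ) ^ (1 - i) :=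
      bernoulliFun_eq_sum 1 (1/2)
    rw [show 2 * 0 + 1 = 1 by norm_num, this]
    simp [Finset.sum_range_succ, bernoulli_one]
    norm_num
  · have h := hasSum_one_div_nat_pow_mul_sin (k := j) hj.ne' (x := 1/2) ⟨by norm_num, by norm_num⟩
    have hfun : ∀ n : ℕ, (1 : ℝ) / (n : ℝ) ^ (2 * j + 1) * Real.sin (2 * π * n * (1/2)) = 0 := by
      intro n
      have h2 : 2 * π * n * (1/2) = (n : ℝ) * π := by ring
      rw [h2, Real.sin_nat_mul_pi, mul_zero]
    rw [funext hfun] at h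
    have h0 := h.unique hasSum_zero
    have hC : ((-1 : ℝ) ^ (j + 1) * (2 * π) ^ (2 * j + 1) / 2 / (2 * j + 1).factorial) ≠ 0 := by
      apply div_ne_zero (div_ne_zero (mul_ne_zero (pow_ne_zero _ (by norm_num)) (pow_ne_zero _ (by positivity))) two_ne_zero)
      exact_mod_cast (Nat.factorial_pos _).ne'
    have := mul_eq_zero.mp h0
    rw [bernoulliFun]
    tauto

theorem stmt_9 (r : ℕ) (hr : 0 < r) (x : ℝ) (hx0 : -π ≤ x) (hx : x ≤ π) :
    HasSum (fun n : ℕ => (-1 : ℝ) ^ n * Real.sin ((n + 1 : ℝ) * x) / (n + 1 : ℝ) ^ (2 * r + 1))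
      ((∑ k ∈ Finset.Icc 1 r,
          (-1 : ℝ) ^ (k - 1) * x ^ (2 * k - 1) * etaR (2 * r + 2 - 2 * k) /
            (Nat.factorial (2 * k - 1)))
        + (-1 : ℝ) ^ r * x ^ (2 * r + 1) / (2 * (Nat.factorial (2 * r + 1)))) := by
  have hπ : (0:ℝ) < π := pi_pos
  set t : ℝ := (x + π) / (2 * π) with ht
  have ht01 : t ∈ Set.Icc (0:ℝ) 1 := by
    constructor
    · apply div_nonneg (by linarith) (by linarith)
    · rw [div_le_one (by linarith)]; linarith
  have h := hasSum_one_div_nat_pow_mul_sin (k := r) hr.ne' ht01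
  have hfun : ∀ n : ℕ, (1:ℝ) / (n:ℝ) ^ (2*r+1) * Real.sin (2 * π * n * t)
      = (-1:ℝ) ^ n * Real.sin ((n:ℝ) * x) / (n:ℝ) ^ (2*r+1) := by
    intro n
    have h2 : 2 * π * n * t = (n:ℝ) * x + (n:ℝ) * π := by
      rw [ht]; field_simp
    rw [h2, Real.sin_add_nat_mul_pi]
    ring
  rw [funext hfun] at h
  set S : ℝ := (-1:ℝ) ^ (r+1) * (2 * π) ^ (2*r+1) / 2 / (2*r+1).factorial *
      (Polynomial.map (algebraMap ℚ ℝ) (Polynomial.bernoulli (2*r+1))).eval t with hS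
  have hshift : HasSum (fun n : ℕ => (-1:ℝ) ^ (n+1) * Real.sin (((n+1:ℕ):ℝ) * x) / ((n+1:ℕ):ℝ) ^ (2*r+1)) S := by
    rw [hasSum_nat_add_iff (f := fun n : ℕ => (-1:ℝ) ^ n * Real.sin ((n:ℝ) * x) / (n:ℝ) ^ (2*r+1)) 1]
    convert h using 1
    · exact rfl
    rw [Finset.sum_range_one, Nat.cast_zero, zero_pow (by omega : 2*r+1 ≠ 0), div_zero, add_zero]
  have h2π : (2 * π) ≠ 0 := by positivity
  have hbf0 : ∀ y : ℝ, bernoulliFun 0 y = 1 := by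
    intro y; rw [bernoulliFun_eq_sum]; simp
  set A : ℝ := (-1:ℝ) ^ r * (2 * π) ^ (2*r+1) / 2 / (2*r+1).factorial with hA
  have key : -S = (∑ k ∈ Finset.Icc 1 r,
          (-1 : ℝ) ^ (k - 1) * x ^ (2 * k - 1) * etaR (2 * r + 2 - 2 * k) /
            (Nat.factorial (2 * k - 1)))
        + (-1 : ℝ) ^ r * x ^ (2 * r + 1) / (2 * (Nat.factorial (2 * r + 1))) := by
    have hbf : (Polynomial.map (algebraMap ℚ ℝ) (Polynomial.bernoulli (2*r+1))).eval t
        = bernoulliFun (2*r+1) t := rfl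
    have ht2 : t = 1/2 + x/(2*π) := by rw [ht]; field_simp; ring
    have expand : -S = ∑ k ∈ Finset.range (2*r+2),
        A * ((2*r+1).choose k : ℝ) * bernoulliFun k (1/2) * (x/(2*π))^(2*r+1-k) := by
      rw [hS, hbf, ht2, bernoulliFun_add, Finset.mul_sum, ← Finset.sum_neg_distrib]
      refine Finset.sum_congr rfl fun k hk => ?_
      simp only [hA, pow_succ]
      ring
    rw [expand]
    have himg : Finset.image (fun m => 2*m) (Finset.range (r+1)) ⊆ Finset.range (2*r+2) := by
      intro k hk
      simp only [Finset.mem_image, Finset.mem_range] at hk ⊢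
      omega
    have hzero : ∀ k ∈ Finset.range (2*r+2), k ∉ Finset.image (fun m => 2*m) (Finset.range (r+1)) →
        A * ((2*r+1).choose k : ℝ) * bernoulliFun k (1/2) * (x/(2*π))^(2*r+1-k) = 0 := by
      intro k hk hnot
      simp only [Finset.mem_image, Finset.mem_range] at hnot hk
      have hodd : ∃ j, k = 2*j+1 := by
        rcases Nat.even_or_odd k with ⟨j, hj⟩ | ⟨j, hj⟩
        · exact absurd ⟨j, by omega, by omega⟩ hnot
        · exact ⟨j, hj⟩
      obtain ⟨j, rfl⟩ := hodd
      rw [bernoulliFun_odd_half]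
      ring
    rw [← Finset.sum_subset himg hzero,
      Finset.sum_image (fun a _ b _ h => by omega : ∀ a ∈ Finset.range (r+1), ∀ b ∈ Finset.range (r+1), 2*a = 2*b → a = b),
      Finset.sum_range_succ']
    congr 1
    · -- main sum
      rw [← Finset.Ico_add_one_right_eq_Icc, Finset.sum_Ico_eq_sum_range,
        ← Finset.sum_range_reflect]
      refine Finset.sum_congr (by simp) fun j hj => ?_
      rw [Finset.mem_range] at hj
      set m := r - j with hmj
      have hm0 : m ≠ 0 := by omega
      have e1 : r - 1 - j + 1 = m := by omega
      have e2 : 2 * (1 + j) - 1 = 2*j+1 := by omega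
      have e3 : 1 + j - 1 = j := by omega
      have e4 : 2 * r + 2 - 2 * (1 + j) = 2 * m := by omega
      have e5 : 2 * r + 1 - 2 * m = 2 * j + 1 := by omega
      rw [e1, e2, e3, e4, e5, etaR_even hm0]
      have hfac := Nat.choose_mul_factorial_mul_factorial (show 2*m ≤ 2*r+1 by omega)
      rw [e5] at hfac
      have hfacR : ((2*r+1).choose (2*m) : ℝ) * ((2*m).factorial : ℝ) * ((2*j+1).factorial : ℝ)
          = ((2*r+1).factorial : ℝ) := by exact_mod_cast hfac
      have hsign : (-1:ℝ)^j * (-1:ℝ)^m = (-1:ℝ)^r := by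
        rw [← pow_add]; congr 1; omega
      have hpow : ((2*π):ℝ)^(2*r+1) = (2*π)^(2*m) * (2*π)^(2*j+1) := by
        rw [← pow_add]; congr 1; omega
      have hf1 : ((2*j+1).factorial : ℝ) ≠ 0 := by exact_mod_cast (Nat.factorial_pos _).ne'
      have hf2 : ((2*m).factorial : ℝ) ≠ 0 := by exact_mod_cast (Nat.factorial_pos _).ne'
      have hf3 : ((2*r+1).factorial : ℝ) ≠ 0 := by exact_mod_cast (Nat.factorial_pos _).ne'
      have hc : (((2*r+1).choose (2*m)) : ℝ) ≠ 0 := by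
        exact_mod_cast (Nat.choose_pos (show 2*m ≤ 2*r+1 by omega)).ne'
      rw [hA, div_pow, ← hsign, ← hfacR, hpow]
      field_simp [pi_ne_zero, hc]
    · -- constant term
      rw [hbf0]
      have hf3 : ((2*r+1).factorial : ℝ) ≠ 0 := by exact_mod_cast (Nat.factorial_pos _).ne'
      rw [hA, div_pow]
      field_simp
      simp only [mul_zero, Nat.choose_zero_right, Nat.sub_zero, Nat.cast_one]
      ring
  rw [← key]
  have heq : (fun n : ℕ => (-1 : ℝ) ^ n * Real.sin ((n + 1 : ℝ) * x) / (n + 1 : ℝ) ^ (2 * r + 1))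
      = fun n : ℕ => -((-1:ℝ) ^ (n+1) * Real.sin (((n+1:ℕ):ℝ) * x) / ((n+1:ℕ):ℝ) ^ (2*r+1)) := by
    funext n
    push_cast
    ring
  rw [heq]
  exact hshift.neg
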